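/- Let G be a graph on {1,…,n} with n ≥ 9 such that G − n = P_{n−1} and the neighbourhood of n in G is {k, k+1} for some k with 2 ≤ k ≤ n−3. Then G is indecomposable and its indecomposability graph is {1, n−1}-covered. -/
import Mathlib


open SimpleGraph

variable {V : Type*}

/-- `I` is an interval (module) of `G`: every vertex outside `I` is adjacent
either to all or to none of the vertices of `I`. -/
def IsInterval (G : SimpleGraph V) (I : Set V) : Prop :=
  ∀ x ∉ I, ∀ a ∈ I, ∀ b ∈ I, (G.Adj a x ↔ G.Adj b x)

/-- A graph is indecomposable if its only intervals are trivial. -/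
def Indecomposable (G : SimpleGraph V) : Prop :=
  ∀ I : Set V, IsInterval G I → I = ∅ ∨ I = Set.univ ∨ ∃ x, I = {x}

def Decomposable (G : SimpleGraph V) : Prop := ¬ Indecomposable G

/-- The path graph on `Fin n`; the vertex `(i : Fin n)` represents the
paper's vertex `i+1`, so edges join consecutive indices. -/
def P (n : ℕ) : SimpleGraph (Fin n) :=
  SimpleGraph.fromRel (fun i j => (i : ℕ) + 1 = (j : ℕ))

/-- The graph `Q_n` on `Fin n` (index `i` represents the paper's vertex `i+1`):
the path on indices `0..n-3` together with the hub index `n-2` (vertex `n-1`)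
joined to every index except `n-2` and `n-3`. -/
def Q (n : ℕ) : SimpleGraph (Fin n) :=
  SimpleGraph.fromRel (fun i j =>
    ((i : ℕ) + 1 = (j : ℕ) ∧ (j : ℕ) ≤ n - 3) ∨
    ((i : ℕ) = n - 2 ∧ (j : ℕ) ≠ n - 2 ∧ (j : ℕ) ≠ n - 3))

/-- `Ext(X)`. -/
def ExtSet (G : SimpleGraph V) (X : Set V) : Set V :=
  {v | v ∉ X ∧ Indecomposable (G.induce (X ∪ {v}))}

/-- `⟨X⟩`. -/
def AngleSet (G : SimpleGraph V) (X : Set V) : Set V :=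
  {v | v ∉ X ∧ ((∀ x ∈ X, G.Adj v x) ∨ (∀ x ∈ X, ¬ G.Adj v x))}

/-- `X(u)`: vertices `v ∉ X` such that `{u,v}` is an interval of `G[X ∪ {v}]`. -/
def XSet (G : SimpleGraph V) (X : Set V) (u : V) : Set V :=
  {v | v ∉ X ∧ IsInterval (G.induce (X ∪ {v})) (Subtype.val ⁻¹' {u, v})}

/-- `G` is `{a,b}`-minimal. -/
def IsMinimal (G : SimpleGraph V) (a b : V) : Prop :=
  Indecomposable G ∧
    ∀ X : Set V, X ⊂ Set.univ → a ∈ X → b ∈ X → 3 ≤ X.ncard →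
      Decomposable (G.induce X)

lemma decomposable_of_split [Finite V] (H : SimpleGraph V) (S : Set V)
    (hS : S.Nonempty) (hS' : Sᶜ.Nonempty) (hcard : 3 ≤ Nat.card V)
    (hsep : ∀ a ∈ S, ∀ b ∉ S, ¬ H.Adj a b) : Decomposable H := by
  intro hind
  have hIS : IsInterval H S := by
    intro z hz a ha b hb
    exact iff_of_false (hsep a ha z hz) (hsep b hb z hz)
  have hISc : IsInterval H Sᶜ := by
    intro z hz a ha b hb
    have hz' : z ∈ S := Set.not_notMem.mp hz
    exact iff_of_false (fun h => hsep z hz' a ha h.symm)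
      (fun h => hsep z hz' b hb h.symm)
  rcases hind S hIS with h | h | ⟨v, hv⟩
  · exact hS.ne_empty h
  · rcases hS' with ⟨w, hw⟩; rw [h] at hw; simp at hw
  · rcases hind Sᶜ hISc with h | h | ⟨w, hw⟩
    · exact hS'.ne_empty h
    · rcases hS with ⟨u, hu⟩
      have : u ∈ Sᶜ := h ▸ Set.mem_univ u
      exact this hu
    · have huniv : (Set.univ : Set V) = {v, w} := by
        rw [← Set.union_compl_self S, hw, hv, Set.singleton_union]
      have h1 : (Set.univ : Set V).ncard = Nat.card V := Set.ncard_univ V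
      have h2 : ({v, w} : Set V).ncard ≤ 2 := by
        refine (Set.ncard_insert_le v {w}).trans ?_
        simp [Set.ncard_singleton]
      rw [huniv] at h1
      omega

theorem Pminus1_double_neighbour (n k : ℕ) (hn : 9 ≤ n) (hk1 : 2 ≤ k) (hk2 : k ≤ n - 3)
    (G : SimpleGraph (Fin n))
    (hpath : ∀ i j : Fin n, (i : ℕ) < n - 1 → (j : ℕ) < n - 1 →
      (G.Adj i j ↔ ((i : ℕ) + 1 = (j : ℕ) ∨ (j : ℕ) + 1 = (i : ℕ))))
    (hN : ∀ j : Fin n, G.Adj ⟨n - 1, by omega⟩ j ↔ ((j : ℕ) + 1 = k ∨ (j : ℕ) = k)) :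
    Indecomposable G ∧
    ∀ x y : Fin n, x ≠ y → (x : ℕ) ≠ 0 → (x : ℕ) ≠ n - 2 →
      (y : ℕ) ≠ 0 → (y : ℕ) ≠ n - 2 →
      Decomposable (G.induce (({x, y} : Set (Fin n))ᶜ)) := by
  have hub_lt : n - 1 < n := by omega
  have adjn : ∀ a b : Fin n, G.Adj a b ↔
      ((((a:ℕ)+1 = (b:ℕ) ∨ (b:ℕ)+1 = (a:ℕ)) ∧ (a:ℕ) < n-1 ∧ (b:ℕ) < n-1) ∨
       ((a:ℕ) = n-1 ∧ ((b:ℕ)+1 = k ∨ (b:ℕ) = k)) ∨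
       ((b:ℕ) = n-1 ∧ ((a:ℕ)+1 = k ∨ (a:ℕ) = k))) := by
    intro a b
    have hba := b.isLt
    rcases Nat.lt_or_ge (a:ℕ) (n-1) with ha1 | ha1
    · rcases Nat.lt_or_ge (b:ℕ) (n-1) with hb1 | hb1
      · rw [hpath a b ha1 hb1]; omega
      · have hb2 : (b:ℕ) = n-1 := by omega
        have h1 : G.Adj a b ↔ ((a:ℕ)+1 = k ∨ (a:ℕ) = k) := by
          rw [G.adj_comm, show b = ⟨n-1, hub_lt⟩ from Fin.ext hb2]
          exact hN a
        rw [h1]; omega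
    · have ha2 : (a:ℕ) = n-1 := by omega
      have h1 : G.Adj a b ↔ ((b:ℕ)+1 = k ∨ (b:ℕ) = k) := by
        rw [show a = ⟨n-1, hub_lt⟩ from Fin.ext ha2]
        exact hN b
      rw [h1]; omega
  constructor
  · -- Part 1: G is indecomposable
    intro I hI
    by_contra hcon
    push_neg at hcon
    obtain ⟨hne, hnu, hns⟩ := hcon
    obtain ⟨a, ha⟩ := hne
    have hb : ∃ b ∈ I, b ≠ a := by
      by_contra h
      push_neg at h
      exact hns a (Set.eq_singleton_iff_unique_mem.mpr ⟨ha, h⟩)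
    obtain ⟨b, hbI, hba⟩ := hb
    have step : ∀ t ∉ I, ∀ p ∈ I, G.Adj p t → ∀ q ∈ I, G.Adj q t :=
      fun t ht p hp hpt q hq => (hI t ht q hq p hp).mpr hpt
    have claim : ∀ d : ℕ, ∀ i j t : Fin n, i ∈ I → j ∈ I → (j:ℕ) ≤ n-2 →
        (t:ℕ) = (i:ℕ) + d → (t:ℕ) ≤ (j:ℕ) → t ∈ I := by
      intro d
      induction d with
      | zero =>
        intro i j t hi _ _ ht _
        have : t = i := Fin.ext (by omega)
        rwa [this]
      | succ d ih =>
        intro i j t hi hj hjn ht htj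
        by_cases htI : t ∈ I
        · exact htI
        exfalso
        have hilt := i.isLt
        have htlt := t.isLt
        obtain ⟨s, hsv⟩ : ∃ s : Fin n, (s:ℕ) = (i:ℕ)+d := ⟨⟨(i:ℕ)+d, by omega⟩, rfl⟩
        have hsI : s ∈ I := ih i j s hi hj hjn hsv (by omega)
        have hadjst : G.Adj s t := (adjn s t).mpr (by omega)
        have hall : ∀ u ∈ I, G.Adj u t := step t htI s hsI hadjst
        have hjt := (adjn j t).mp (hall j hj)
        have hit := (adjn i t).mp (hall i hi)
        have hd0 : d = 0 ∧ (j:ℕ) = (i:ℕ) + 2 ∧ (t:ℕ) = (i:ℕ)+1 := by omega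
        rcases Nat.lt_or_ge ((j:ℕ)+1) (n-1) with hcase | hcase
        · obtain ⟨q, hqv⟩ : ∃ q : Fin n, (q:ℕ) = (j:ℕ)+1 := ⟨⟨(j:ℕ)+1, by omega⟩, rfl⟩
          have hqI : q ∉ I := by
            intro hqI
            have := (adjn q t).mp (hall q hqI)
            omega
          have hadjjq : G.Adj j q := (adjn j q).mpr (by omega)
          have := (adjn i q).mp (step q hqI j hj hadjjq i hi)
          omega
        · obtain ⟨q, hqv⟩ : ∃ q : Fin n, (q:ℕ) = (i:ℕ)-1 := ⟨⟨(i:ℕ)-1, by omega⟩, rfl⟩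
          have hqI : q ∉ I := by
            intro hqI
            have := (adjn q t).mp (hall q hqI)
            omega
          have hadjiq : G.Adj i q := (adjn i q).mpr (by omega)
          have := (adjn j q).mp (step q hqI i hi hadjiq j hj)
          omega
    by_cases hA : ∃ p q : Fin n, p ∈ I ∧ q ∈ I ∧ (p:ℕ) < (q:ℕ) ∧ (q:ℕ) ≤ n-2
    · -- Case A: two path vertices in I → I = univ
      obtain ⟨p, q, hp, hq, hpq, hqn⟩ := hA
      have down : ∀ d : ℕ, ∀ t : Fin n, (t:ℕ) + d = (p:ℕ) → t ∈ I := by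
        intro d
        induction d with
        | zero => intro t ht; have : t = p := Fin.ext (by omega); rwa [this]
        | succ d ih =>
          intro t ht
          by_cases htI : t ∈ I
          · exact htI
          exfalso
          obtain ⟨s, hsv⟩ : ∃ s : Fin n, (s:ℕ) = (t:ℕ)+1 := ⟨⟨(t:ℕ)+1, by omega⟩, rfl⟩
          have hsI : s ∈ I := ih s (by omega)
          obtain ⟨s2, hs2v⟩ : ∃ s2 : Fin n, (s2:ℕ) = (t:ℕ)+2 := ⟨⟨(t:ℕ)+2, by omega⟩, rfl⟩
          have hs2I : s2 ∈ I := claim 1 s q s2 hsI hq hqn (by omega) (by omega)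
          have hadjst : G.Adj s t := (adjn s t).mpr (by omega)
          have := (adjn s2 t).mp (step t htI s hsI hadjst s2 hs2I)
          omega
      have up : ∀ d : ℕ, ∀ t : Fin n, (t:ℕ) = (q:ℕ) + d → (t:ℕ) ≤ n-2 → t ∈ I := by
        intro d
        induction d with
        | zero => intro t ht _; have : t = q := Fin.ext (by omega); rwa [this]
        | succ d ih =>
          intro t ht htn
          by_cases htI : t ∈ I
          · exact htI
          exfalso
          obtain ⟨s, hsv⟩ : ∃ s : Fin n, (s:ℕ) = (q:ℕ)+d := ⟨⟨(q:ℕ)+d, by omega⟩, rfl⟩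
          have hsI : s ∈ I := ih s hsv (by omega)
          obtain ⟨s2, hs2v⟩ : ∃ s2 : Fin n, (s2:ℕ) = (q:ℕ)+d-1 :=
            ⟨⟨(q:ℕ)+d-1, by omega⟩, rfl⟩
          have hs2I : s2 ∈ I :=
            claim ((q:ℕ)+d-1-(p:ℕ)) p s s2 hp hsI (by omega) (by omega) (by omega)
          have hadjst : G.Adj s t := (adjn s t).mpr (by omega)
          have := (adjn s2 t).mp (step t htI s hsI hadjst s2 hs2I)
          omega
      obtain ⟨hub, hubv⟩ : ∃ h : Fin n, (h:ℕ) = n-1 := ⟨⟨n-1, hub_lt⟩, rfl⟩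
      have hallpath : ∀ v : Fin n, (v:ℕ) ≤ n-2 → v ∈ I := by
        intro v hv
        rcases Nat.lt_or_ge (v:ℕ) (p:ℕ) with h | h
        · exact down ((p:ℕ)-(v:ℕ)) v (by omega)
        · rcases le_or_gt (v:ℕ) (q:ℕ) with h2 | h2
          · exact claim ((v:ℕ)-(p:ℕ)) p q v hp hq hqn (by omega) h2
          · exact up ((v:ℕ)-(q:ℕ)) v (by omega) hv
      have hhubI : hub ∈ I := by
        by_contra hh
        obtain ⟨km1, hkm1v⟩ : ∃ v : Fin n, (v:ℕ) = k-1 := ⟨⟨k-1, by omega⟩, rfl⟩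
        obtain ⟨z, hzv⟩ : ∃ v : Fin n, (v:ℕ) = 0 := ⟨⟨0, by omega⟩, rfl⟩
        have h1 : G.Adj km1 hub := (adjn km1 hub).mpr (by omega)
        have := (adjn z hub).mp
          (step hub hh km1 (hallpath km1 (by omega)) h1 z (hallpath z (by omega)))
        omega
      apply hnu
      apply Set.eq_univ_of_forall
      intro v
      rcases Nat.lt_or_ge (v:ℕ) (n-1) with h | h
      · exact hallpath v (by omega)
      · have hveq : v = hub := Fin.ext (by have := v.isLt; omega)
        rwa [hveq]
    · -- Case B: I = {hub, p}
      have hA' : ∀ p q : Fin n, p ∈ I → q ∈ I → (p:ℕ) < (q:ℕ) → ¬((q:ℕ) ≤ n-2) :=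
        fun p q hp hq hlt hle => hA ⟨p, q, hp, hq, hlt, hle⟩
      obtain ⟨hub, hubv⟩ : ∃ h : Fin n, (h:ℕ) = n-1 := ⟨⟨n-1, hub_lt⟩, rfl⟩
      have hmain : ∃ p : Fin n, p ∈ I ∧ (p:ℕ) ≤ n-2 ∧ hub ∈ I := by
        have halt := a.isLt
        have hblt := b.isLt
        rcases Nat.lt_trichotomy (a:ℕ) (b:ℕ) with h | h | h
        · have hb2 : (b:ℕ) = n-1 := by have := hA' a b ha hbI h; omega
          exact ⟨a, ha, by omega, by rwa [show hub = b from Fin.ext (by omega)]⟩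
        · exact absurd (Fin.ext h).symm hba
        · have ha2 : (a:ℕ) = n-1 := by have := hA' b a hbI ha h; omega
          exact ⟨b, hbI, by omega, by rwa [show hub = a from Fin.ext (by omega)]⟩
      obtain ⟨p, hpI, hpn, hhubI⟩ := hmain
      have huniq : ∀ c ∈ I, (c:ℕ) = n-1 ∨ (c:ℕ) = (p:ℕ) := by
        intro c hc
        by_contra hcc
        push_neg at hcc
        have hcn := c.isLt
        rcases Nat.lt_trichotomy (c:ℕ) (p:ℕ) with h | h | h
        · exact (hA' c p hc hpI h) hpn
        · exact hcc.2 h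
        · have := hA' p c hpI hc h; omega
      have getq : ∀ m : ℕ, m < n → m ≠ n-1 → m ≠ (p:ℕ) →
          ∃ qq : Fin n, (qq:ℕ) = m ∧ qq ∉ I := by
        intro m hm hm1 hm2
        refine ⟨⟨m, hm⟩, rfl, ?_⟩
        intro hqI
        rcases huniq _ hqI with h | h
        · exact hm1 h
        · exact hm2 h
      by_cases h1 : (p:ℕ) = k-1
      · obtain ⟨q, hqv, hqI⟩ := getq (k-2) (by omega) (by omega) (by omega)
        have hadj : G.Adj p q := (adjn p q).mpr (by omega)
        have := (adjn hub q).mp (step q hqI p hpI hadj hub hhubI)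
        omega
      by_cases h2 : (p:ℕ) = k
      · obtain ⟨q, hqv, hqI⟩ := getq (k+1) (by omega) (by omega) (by omega)
        have hadj : G.Adj p q := (adjn p q).mpr (by omega)
        have := (adjn hub q).mp (step q hqI p hpI hadj hub hhubI)
        omega
      by_cases h3 : (p:ℕ) = k-2
      · obtain ⟨q, hqv, hqI⟩ := getq k (by omega) (by omega) (by omega)
        have hadj : G.Adj hub q := (adjn hub q).mpr (by omega)
        have := (adjn p q).mp (step q hqI hub hhubI hadj p hpI)
        omega
      · obtain ⟨q, hqv, hqI⟩ := getq (k-1) (by omega) (by omega) (by omega)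
        have hadj : G.Adj hub q := (adjn hub q).mpr (by omega)
        have := (adjn p q).mp (step q hqI hub hhubI hadj p hpI)
        omega
  · -- Part 2
    have key : ∀ x y : Fin n, (x:ℕ) < (y:ℕ) → (x : ℕ) ≠ 0 → (x : ℕ) ≠ n - 2 →
        (y : ℕ) ≠ 0 → (y : ℕ) ≠ n - 2 →
        Decomposable (G.induce (({x, y} : Set (Fin n))ᶜ)) := by
      intro x y hlt hx0 hx2 hy0 hy2
      have hxlt := x.isLt
      have hylt := y.isLt
      have hxy : x ≠ y := fun h => by rw [h] at hlt; omega
      have memT : ∀ v : Fin n, v ∈ (({x, y} : Set (Fin n))ᶜ) ↔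
          ((v:ℕ) ≠ (x:ℕ) ∧ (v:ℕ) ≠ (y:ℕ)) := by
        intro v
        simp [Set.mem_compl_iff, Set.mem_insert_iff, Set.mem_singleton_iff,
          Fin.ext_iff, not_or]
      have card3 : 3 ≤ Nat.card ↥(({x, y} : Set (Fin n))ᶜ) := by
        have h1 : ({x, y} : Set (Fin n)).ncard = 2 := Set.ncard_pair hxy
        have h2 := Set.ncard_add_ncard_compl ({x, y} : Set (Fin n))
        have h3 : Nat.card (Fin n) = n := by simp
        have h4 : Nat.card ↥(({x, y} : Set (Fin n))ᶜ) =
            ((({x, y} : Set (Fin n))ᶜ)).ncard := Nat.card_coe_set_eq _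
        omega
      have main : ∀ Pr : ℕ → Prop,
          (∃ a : ℕ, a < n ∧ a ≠ (x:ℕ) ∧ a ≠ (y:ℕ) ∧ Pr a) →
          (∃ b : ℕ, b < n ∧ b ≠ (x:ℕ) ∧ b ≠ (y:ℕ) ∧ ¬ Pr b) →
          (∀ a b : Fin n, (a:ℕ) ≠ (x:ℕ) → (a:ℕ) ≠ (y:ℕ) → (b:ℕ) ≠ (x:ℕ) →
            (b:ℕ) ≠ (y:ℕ) → Pr (a:ℕ) → ¬ Pr (b:ℕ) → ¬ G.Adj a b) →
          Decomposable (G.induce (({x, y} : Set (Fin n))ᶜ)) := by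
        intro Pr hne hne' hsep
        apply decomposable_of_split _
          {v : ↥(({x, y} : Set (Fin n))ᶜ) | Pr ((v : Fin n) : ℕ)} ?_ ?_ card3 ?_
        · obtain ⟨a, ha, hax, hay, hPa⟩ := hne
          exact ⟨⟨⟨a, ha⟩, (memT _).mpr ⟨hax, hay⟩⟩, hPa⟩
        · obtain ⟨b, hb, hbx, hby, hPb⟩ := hne'
          exact ⟨⟨⟨b, hb⟩, (memT _).mpr ⟨hbx, hby⟩⟩, hPb⟩
        · intro a ha b hb hadj
          have hm1 := (memT a.1).mp a.2
          have hm2 := (memT b.1).mp b.2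
          have hgadj : G.Adj a.1 b.1 := by simpa using hadj
          exact hsep a.1 b.1 hm1.1 hm1.2 hm2.1 hm2.2 ha hb hgadj
      rcases Nat.lt_or_ge (y:ℕ) (n-1) with hyv | hyv
      · -- y is a path vertex; so 1 ≤ x < y ≤ n-3
        have hy3 : (y:ℕ) ≤ n-3 := by omega
        rcases Nat.lt_or_ge (x:ℕ) k with hkx | hkx
        · rcases Nat.lt_or_ge (y:ℕ) k with hky | hky
          · -- x < y < k : take low part {v < x}
            apply main (fun a => a < (x:ℕ))
            · exact ⟨0, by omega, by omega, by omega, by omega⟩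
            · exact ⟨n-1, by omega, by omega, by omega, by omega⟩
            · intro a b hax hay hbx hby hPa hPb hadj
              have := (adjn a b).mp hadj; omega
          · -- x < k ≤ y : take low ∪ high
            apply main (fun a => a < (x:ℕ) ∨ ((y:ℕ) < a ∧ a ≤ n-2))
            · exact ⟨0, by omega, by omega, by omega, by omega⟩
            · exact ⟨n-1, by omega, by omega, by omega, by omega⟩
            · intro a b hax hay hbx hby hPa hPb hadj
              have := (adjn a b).mp hadj; omega
        · -- k ≤ x : take high part
          apply main (fun a => (y:ℕ) < a ∧ a ≤ n-2)
          · exact ⟨(y:ℕ)+1, by omega, by omega, by omega, by omega⟩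
          · exact ⟨0, by omega, by omega, by omega, by omega⟩
          · intro a b hax hay hbx hby hPa hPb hadj
            have := (adjn a b).mp hadj; omega
      · -- y is the hub; 1 ≤ x ≤ n-3, take low part
        have hyv' : (y:ℕ) = n-1 := by omega
        apply main (fun a => a < (x:ℕ))
        · exact ⟨0, by omega, by omega, by omega, by omega⟩
        · exact ⟨(x:ℕ)+1, by omega, by omega, by omega, by omega⟩
        · intro a b hax hay hbx hby hPa hPb hadj
          have := (adjn a b).mp hadj; omega
    intro x y hxy hx0 hx2 hy0 hy2
    rcases Nat.lt_trichotomy (x:ℕ) (y:ℕ) with h | h | h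
    · exact key x y h hx0 hx2 hy0 hy2
    · exact absurd (Fin.ext h) hxy
    · rw [Set.pair_comm]
      exact key y x h hy0 hy2 hx0 hx2
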